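/- arXiv:1905.09516 — 2 statements merged into one kernel-verified Lean document; each statement's English description precedes it below -/
import Mathlib

section
/- Let G be a totally disconnected Hausdorff locally compact group and φ a continuous endomorphism of G. Suppose there exists a local base ℬ at the identity consisting of compact open subgroups of G such that for every U ∈ ℬ and every n ≥ 1 the subgroup φ⁻ⁿ(U) is normal in G. Then h_top(φ|_{ker φ}) = 0 and h_top(φ) = h_top(φ̄), where φ̄ is the endomorphism induced by φ on the quotient G/ker φ. -/
open MeasureTheory Filter Topology Pointwise
open scoped ENNReal NNReal Classical

/-- The `n`-th `φ`-cotrajectory of `U`: `U ∩ φ⁻¹(U) ∩ … ∩ φ⁻⁽ⁿ⁻¹⁾(U)`. -/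
def cotraj {G : Type*} (φ : G → G) (U : Set G) (n : ℕ) : Set G :=
  ⋂ k ∈ Finset.range n, (φ^[k]) ⁻¹' U

/-- Topological entropy of a (continuous) endomorphism of a locally compact Hausdorff
topological group, computed with respect to a left Haar measure:
`h_top(φ) = sup_U limsup_n (−log μ(C_n(φ,U)))/n`, the supremum over all compact
neighborhoods `U` of `1`. -/
noncomputable def mulHtop {G : Type*} [Group G] [TopologicalSpace G] (φ : G → G) : ℝ≥0∞ :=
  letI : MeasurableSpace G := borel G
  haveI : BorelSpace G := ⟨rfl⟩
  if h : IsTopologicalGroup G ∧ T2Space G ∧ LocallyCompactSpace G then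
    haveI := h.1
    haveI := h.2.1
    haveI := h.2.2
    ⨆ U ∈ {U : Set G | IsCompact U ∧ U ∈ 𝓝 (1 : G)},
      Filter.atTop.limsup fun n : ℕ =>
        ENNReal.ofReal
          ((-Real.log ((MeasureTheory.Measure.haar (cotraj φ U n)).toReal)) / n)
  else 0

/-- The restriction of an endomorphism to an invariant subgroup
(junk value `1` if the subgroup is not invariant). -/
noncomputable def mulSubHom {G : Type*} [Group G] (φ : G →* G) (H : Subgroup G) : H →* H :=
  if h : H ≤ H.comap φ then (φ.domRestrict H).codRestrict H (fun x => h x.2) else 1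

/-- The endomorphism induced on the quotient by an invariant normal subgroup
(junk value `1` if the subgroup is not invariant). -/
noncomputable def mulQuotHom {G : Type*} [Group G] (φ : G →* G) (H : Subgroup G) [H.Normal] :
    G ⧸ H →* G ⧸ H :=
  if h : H ≤ H.comap φ then QuotientGroup.map H H φ h else 1

/-! ### Auxiliary lemmas about `cotraj` -/

lemma mem_cotraj {G : Type*} {φ : G → G} {U : Set G} {n : ℕ} {x : G} :
    x ∈ cotraj φ U n ↔ ∀ k < n, φ^[k] x ∈ U := by
  simp [cotraj]

lemma cotraj_subset {G : Type*} (φ : G → G) (U : Set G) {n : ℕ} (hn : 1 ≤ n) :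
    cotraj φ U n ⊆ U := by
  intro x hx
  simpa using mem_cotraj.1 hx 0 hn

lemma cotraj_mono {G : Type*} (φ : G → G) {U V : Set G} (h : U ⊆ V) (n : ℕ) :
    cotraj φ U n ⊆ cotraj φ V n := fun x hx =>
  mem_cotraj.2 fun k hk => h (mem_cotraj.1 hx k hk)

lemma cotraj_isOpen {G : Type*} [TopologicalSpace G] {φ : G → G} (hφ : Continuous φ)
    {U : Set G} (hU : IsOpen U) (n : ℕ) : IsOpen (cotraj φ U n) := by
  refine Set.Finite.isOpen_biInter (Finset.range n).finite_toSet fun k _ => ?_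
  exact hU.preimage (hφ.iterate k)

lemma one_mem_cotraj {G : Type*} [Group G] {φ : G → G} (hφ1 : φ 1 = 1) {U : Set G}
    (hU1 : (1 : G) ∈ U) (n : ℕ) : (1 : G) ∈ cotraj φ U n :=
  mem_cotraj.2 fun k _ => by rw [Function.iterate_fixed hφ1 k]; exact hU1

/-- The cotrajectory of a subgroup under a group endomorphism is a subgroup. -/
def cotrajGrp {G : Type*} [Group G] (φ : G →* G) (U : Subgroup G) (n : ℕ) : Subgroup G where
  carrier := cotraj ⇑φ ↑U n
  one_mem' := one_mem_cotraj (map_one φ) U.one_mem n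
  mul_mem' ha hb := mem_cotraj.2 fun k hk => by
    rw [iterate_map_mul]
    exact U.mul_mem (mem_cotraj.1 ha k hk) (mem_cotraj.1 hb k hk)
  inv_mem' ha := mem_cotraj.2 fun k hk => by
    rw [iterate_map_inv]
    exact U.inv_mem (mem_cotraj.1 ha k hk)

lemma coe_cotrajGrp {G : Type*} [Group G] (φ : G →* G) (U : Subgroup G) (n : ℕ) :
    (cotrajGrp φ U n : Set G) = cotraj ⇑φ ↑U n := rfl

lemma iterate_map_ker {G : Type*} [Group G] (φ : G →* G) {x : G} (hx : x ∈ φ.ker)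
    {k : ℕ} (hk : 1 ≤ k) : (⇑φ)^[k] x = 1 := by
  obtain ⟨j, rfl⟩ := Nat.exists_eq_add_of_le hk
  rw [add_comm, Function.iterate_add_apply, Function.iterate_one,
    MonoidHom.mem_ker.1 hx]
  exact iterate_map_one φ j

lemma inf_ker_le_cotrajGrp {G : Type*} [Group G] (φ : G →* G) (U : Subgroup G) (n : ℕ) :
    U ⊓ φ.ker ≤ cotrajGrp φ U n := by
  rintro x ⟨hxU, hxK⟩
  refine mem_cotraj.2 fun k hk => ?_
  rcases Nat.eq_zero_or_pos k with rfl | hkpos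
  · simpa using hxU
  · rw [iterate_map_ker φ hxK hkpos]
    exact U.one_mem

/-! ### Limsup lemmas -/

lemma aux_limsup_add_le (u v : ℕ → ℝ≥0∞) :
    atTop.limsup (fun n => u n + v n) ≤ atTop.limsup u + atTop.limsup v := by
  rcases eq_top_or_lt_top (atTop.limsup u) with hu | hu
  · simp [hu]
  rcases eq_top_or_lt_top (atTop.limsup v) with hv | hv
  · simp [hv]
  refine ENNReal.le_of_forall_pos_le_add fun ε hε _ => ?_
  have hε2 : (0 : ℝ≥0∞) < (ε : ℝ≥0∞) / 2 := by
    simp [ENNReal.div_pos_iff, hε.ne']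
  have h1 : ∀ᶠ n in atTop, u n < atTop.limsup u + ε / 2 :=
    Filter.eventually_lt_of_limsup_lt (ENNReal.lt_add_right hu.ne hε2.ne')
  have h2 : ∀ᶠ n in atTop, v n < atTop.limsup v + ε / 2 :=
    Filter.eventually_lt_of_limsup_lt (ENNReal.lt_add_right hv.ne hε2.ne')
  refine Filter.limsup_le_of_le (by isBoundedDefault) ?_
  filter_upwards [h1, h2] with n hn1 hn2
  calc u n + v n ≤ (atTop.limsup u + ε / 2) + (atTop.limsup v + ε / 2) :=
        add_le_add hn1.le hn2.le
    _ = atTop.limsup u + atTop.limsup v + (ε / 2 + ε / 2) := by ring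
    _ = atTop.limsup u + atTop.limsup v + ε := by rw [ENNReal.add_halves]

lemma aux_limsup_zero (c : ℝ) :
    atTop.limsup (fun n : ℕ => ENNReal.ofReal (c / n)) = 0 := by
  have h : Filter.Tendsto (fun n : ℕ => ENNReal.ofReal (c / n)) atTop (𝓝 0) := by
    have := tendsto_const_div_atTop_nhds_zero_nat c
    simpa [Function.comp_def] using (ENNReal.continuous_ofReal.tendsto 0).comp this
  exact h.limsup_eq

/-- Core comparison: if `m' n ≤ c * m n` eventually (with everything positive & finite),
then `limsup (-log m n / n) ≤ limsup (-log m' n / n)`. -/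
lemma aux_limsup_log_le (m m' : ℕ → ℝ≥0∞) (c : ℝ≥0∞) (hc0 : c ≠ 0) (hctop : c ≠ ⊤)
    (hm : ∀ᶠ n in atTop, m n ≠ 0 ∧ m n ≠ ⊤)
    (hm' : ∀ᶠ n in atTop, m' n ≠ 0 ∧ m' n ≠ ⊤)
    (hle : ∀ᶠ n in atTop, m' n ≤ c * m n) :
    (atTop.limsup fun n : ℕ => ENNReal.ofReal ((-Real.log ((m n).toReal)) / n)) ≤
      atTop.limsup fun n : ℕ => ENNReal.ofReal ((-Real.log ((m' n).toReal)) / n) := by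
  set L := Real.log c.toReal with hL
  have key : ∀ᶠ n in atTop,
      ENNReal.ofReal ((-Real.log ((m n).toReal)) / n) ≤
      ENNReal.ofReal ((-Real.log ((m' n).toReal)) / n) + ENNReal.ofReal (L / n) := by
    filter_upwards [hm, hm', hle, Filter.eventually_ge_atTop 1] with n hmn hm'n hlen hn1
    have hmpos : 0 < (m n).toReal := ENNReal.toReal_pos hmn.1 hmn.2
    have hm'pos : 0 < (m' n).toReal := ENNReal.toReal_pos hm'n.1 hm'n.2
    have hcpos : 0 < c.toReal := ENNReal.toReal_pos hc0 hctop
    have h1 : (m' n).toReal ≤ c.toReal * (m n).toReal := by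
      rw [← ENNReal.toReal_mul]
      exact ENNReal.toReal_mono (ENNReal.mul_ne_top hctop hmn.2) hlen
    have h2 : Real.log ((m' n).toReal) ≤ L + Real.log ((m n).toReal) := by
      calc Real.log ((m' n).toReal) ≤ Real.log (c.toReal * (m n).toReal) :=
            Real.log_le_log hm'pos h1
        _ = L + Real.log ((m n).toReal) := Real.log_mul hcpos.ne' hmpos.ne'
    have h3 : (-Real.log ((m n).toReal)) ≤ (-Real.log ((m' n).toReal)) + L := by linarith
    have hnpos : (0 : ℝ) < (n : ℝ) := by exact_mod_cast hn1
    have h4 : (-Real.log ((m n).toReal)) / n ≤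
        (-Real.log ((m' n).toReal)) / n + L / n := by
      rw [← add_div]
      exact div_le_div_of_nonneg_right h3 hnpos.le |>.trans le_rfl
    calc ENNReal.ofReal ((-Real.log ((m n).toReal)) / n)
        ≤ ENNReal.ofReal ((-Real.log ((m' n).toReal)) / n + L / n) :=
          ENNReal.ofReal_le_ofReal h4
      _ ≤ _ := ENNReal.ofReal_add_le
  calc (atTop.limsup fun n : ℕ => ENNReal.ofReal ((-Real.log ((m n).toReal)) / n))
      ≤ atTop.limsup fun n : ℕ =>
          ENNReal.ofReal ((-Real.log ((m' n).toReal)) / n) + ENNReal.ofReal (L / n) :=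
        Filter.limsup_le_limsup key
    _ ≤ (atTop.limsup fun n : ℕ => ENNReal.ofReal ((-Real.log ((m' n).toReal)) / n))
          + atTop.limsup fun n : ℕ => ENNReal.ofReal (L / n) := aux_limsup_add_le _ _
    _ = _ := by rw [aux_limsup_zero, add_zero]

/-! ### `hen`, the per-neighborhood entropy -/

noncomputable def hen {H : Type*} [MeasurableSpace H] (μ : Measure H) (ψ : H → H)
    (U : Set H) : ℝ≥0∞ :=
  atTop.limsup fun n : ℕ => ENNReal.ofReal ((-Real.log ((μ (cotraj ψ U n)).toReal)) / n)

lemma mulHtop_eq {H : Type*} [Group H] [TopologicalSpace H] [IsTopologicalGroup H] [T2Space H]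
    [LocallyCompactSpace H] (ψ : H → H) :
    mulHtop ψ =
      letI : MeasurableSpace H := borel H
      haveI : BorelSpace H := ⟨rfl⟩
      ⨆ U ∈ {U : Set H | IsCompact U ∧ U ∈ 𝓝 (1 : H)}, hen Measure.haar ψ U := by
  rw [mulHtop, dif_pos ⟨‹_›, ‹_›, ‹_›⟩]
  rfl

lemma hen_le {H H' : Type*} [MeasurableSpace H] [MeasurableSpace H']
    (μ : Measure H) (ν : Measure H') (ψ : H → H) (ψ' : H' → H') (U : Set H) (V : Set H')
    (c : ℝ≥0∞) (hc0 : c ≠ 0) (hctop : c ≠ ⊤)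
    (hμ : ∀ᶠ n in atTop, μ (cotraj ψ U n) ≠ 0 ∧ μ (cotraj ψ U n) ≠ ⊤)
    (hν : ∀ᶠ n in atTop, ν (cotraj ψ' V n) ≠ 0 ∧ ν (cotraj ψ' V n) ≠ ⊤)
    (hle : ∀ᶠ n in atTop, ν (cotraj ψ' V n) ≤ c * μ (cotraj ψ U n)) :
    hen μ ψ U ≤ hen ν ψ' V :=
  aux_limsup_log_le _ _ c hc0 hctop hμ hν hle

lemma ev_posfin {H : Type*} [Group H] [TopologicalSpace H] [MeasurableSpace H]
    [BorelSpace H] (μ : Measure H) [μ.IsOpenPosMeasure] [IsFiniteMeasureOnCompacts μ]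
    {ψ : H → H} (hψc : Continuous ψ) (hψ1 : ψ 1 = 1) {W V : Set H}
    (hWopen : IsOpen W) (hW1 : (1 : H) ∈ W) (hWV : W ⊆ V) (hVcpt : IsCompact V) :
    ∀ᶠ n in atTop, μ (cotraj ψ V n) ≠ 0 ∧ μ (cotraj ψ V n) ≠ ⊤ := by
  filter_upwards [Filter.eventually_ge_atTop 1] with n hn
  constructor
  · have hpos : 0 < μ (cotraj ψ W n) :=
      (cotraj_isOpen hψc hWopen n).measure_pos μ ⟨1, one_mem_cotraj hψ1 hW1 n⟩
    have hmono : μ (cotraj ψ W n) ≤ μ (cotraj ψ V n) := measure_mono (cotraj_mono ψ hWV n)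
    exact (lt_of_lt_of_le hpos hmono).ne'
  · exact ((measure_mono (cotraj_subset ψ V hn)).trans_lt hVcpt.measure_lt_top).ne

/-! ### Coset counting -/

lemma measure_eq_ncard_mul {H : Type*} [Group H] [TopologicalSpace H] [IsTopologicalGroup H]
    [MeasurableSpace H] [BorelSpace H] (μ : Measure H) [μ.IsMulLeftInvariant]
    (A B : Subgroup H) (hBA : B ≤ A) (hA : IsCompact (A : Set H)) (hB : IsOpen (B : Set H)) :
    ((QuotientGroup.mk '' (A : Set H) : Set (H ⧸ B))).Finite ∧
      μ (A : Set H) =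
        ((QuotientGroup.mk '' (A : Set H) : Set (H ⧸ B)).ncard) * μ (B : Set H) := by
  set q : H → H ⧸ B := QuotientGroup.mk with hq
  have fiber_eq : ∀ x : H, q ⁻¹' {q x} = (fun y => x⁻¹ * y) ⁻¹' (B : Set H) := by
    intro x
    ext y
    simp only [Set.mem_preimage, Set.mem_singleton_iff, hq]
    rw [eq_comm, QuotientGroup.eq]
    rfl
  have fiber_open : ∀ x : H, IsOpen (q ⁻¹' {q x}) := fun x => by
    rw [fiber_eq]; exact hB.preimage (continuous_mul_left x⁻¹)
  have fiber_meas : ∀ x : H, μ (q ⁻¹' {q x}) = μ (B : Set H) := fun x => by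
    rw [fiber_eq]; exact measure_preimage_mul μ x⁻¹ _
  have hcov : (A : Set H) ⊆ ⋃ x ∈ (A : Set H), q ⁻¹' {q x} := fun y hy =>
    Set.mem_biUnion hy (by simp)
  obtain ⟨t, htA, htfin, htcov⟩ :=
    hA.elim_finite_subcover_image (fun x _ => fiber_open x) hcov
  have hSfin : ((q '' (A : Set H)) : Set (H ⧸ B)).Finite := by
    have : q '' (A : Set H) ⊆ q '' t := by
      rintro c ⟨a, ha, rfl⟩
      obtain ⟨x, hxt, hx⟩ := Set.mem_iUnion₂.1 (htcov ha)
      exact ⟨x, hxt, (Set.mem_singleton_iff.1 hx).symm⟩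
    exact (htfin.image q).subset this
  refine ⟨hSfin, ?_⟩
  have hdecomp : (A : Set H) = ⋃ c ∈ hSfin.toFinset, q ⁻¹' {c} := by
    apply Set.Subset.antisymm
    · intro a ha
      have hqa : q a ∈ hSfin.toFinset := by
        simp only [Set.Finite.mem_toFinset]
        exact ⟨a, ha, rfl⟩
      exact Set.mem_biUnion hqa (by simp)
    · intro y hy
      obtain ⟨c, hc, hyc⟩ := Set.mem_iUnion₂.1 hy
      have hc' : c ∈ q '' (A : Set H) := by simpa using hc
      obtain ⟨x, hxA, rfl⟩ := hc'
      have : y ∈ q ⁻¹' {q x} := hyc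
      rw [fiber_eq] at this
      have : x⁻¹ * y ∈ B := this
      have : x * (x⁻¹ * y) ∈ A := A.mul_mem hxA (hBA this)
      simpa using this
  conv_lhs => rw [hdecomp]
  rw [measure_biUnion_finset ?_ ?_]
  · have : ∀ c ∈ hSfin.toFinset, μ (q ⁻¹' {c}) = μ (B : Set H) := by
      intro c hc
      have hc' : c ∈ q '' (A : Set H) := by simpa using hc
      obtain ⟨x, _, rfl⟩ := hc'
      exact fiber_meas x
    rw [Finset.sum_congr rfl this, Finset.sum_const, nsmul_eq_mul]
    congr 1
    rw [Set.ncard_eq_toFinset_card _ hSfin]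
  · intro c hc c' hc' hne
    simp only [Function.onFun]
    refine Set.disjoint_left.2 fun y hy hy' => hne ?_
    have h1 : q y = c := hy
    have h2 : q y = c' := hy'
    rw [← h1, h2]
  · intro c hc
    have hc' : c ∈ q '' (A : Set H) := by simpa using hc
    obtain ⟨x, _, rfl⟩ := hc'
    exact (fiber_open x).measurableSet

lemma ncard_coset_image_eq {G : Type*} [Group G] (K : Subgroup G) [K.Normal]
    (U C : Subgroup G) (hCU : C ≤ U) (hUK : U ⊓ K ≤ C) :
    ((QuotientGroup.mk '' (U : Set G) : Set (G ⧸ C))).ncard =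
      ((QuotientGroup.mk '' ((U.map (QuotientGroup.mk' K)) : Set (G ⧸ K)) :
        Set ((G ⧸ K) ⧸ C.map (QuotientGroup.mk' K)))).ncard := by
  set π : G →* G ⧸ K := QuotientGroup.mk' K with hπ
  set Cb : Subgroup (G ⧸ K) := C.map π with hCb
  have hresp : ∀ x y : G, (QuotientGroup.leftRel C) x y →
      (QuotientGroup.leftRel Cb) (π x) (π y) := by
    intro x y h
    rw [QuotientGroup.leftRel_apply] at h ⊢
    rw [← map_inv, ← map_mul]
    exact ⟨_, h, rfl⟩
  set F : G ⧸ C → (G ⧸ K) ⧸ Cb := Quotient.map' ⇑π hresp with hF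
  have hFmk : ∀ x : G, F (QuotientGroup.mk x) = QuotientGroup.mk (π x) := fun x => rfl
  have himg : (QuotientGroup.mk '' ((U.map π : Subgroup (G ⧸ K)) : Set (G ⧸ K)) :
      Set ((G ⧸ K) ⧸ Cb)) = F '' (QuotientGroup.mk '' (U : Set G)) := by
    rw [Subgroup.coe_map, Set.image_image, Set.image_image]
    exact Set.image_congr fun x _ => (hFmk x).symm
  have hinj : Set.InjOn F (QuotientGroup.mk '' (U : Set G)) := by
    rintro _ ⟨x, hx, rfl⟩ _ ⟨y, hy, rfl⟩ hxy
    rw [hFmk, hFmk, QuotientGroup.eq] at hxy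
    rw [QuotientGroup.eq]
    obtain ⟨c, hc, hceq⟩ := hxy
    have h1 : π (c⁻¹ * (x⁻¹ * y)) = 1 := by
      rw [map_mul, map_inv, hceq, map_mul, map_inv]
      group
    have h2 : c⁻¹ * (x⁻¹ * y) ∈ K := by
      rwa [← QuotientGroup.ker_mk' K, MonoidHom.mem_ker]
    have h3 : c⁻¹ * (x⁻¹ * y) ∈ U :=
      U.mul_mem (U.inv_mem (hCU hc)) (U.mul_mem (U.inv_mem hx) hy)
    have h4 : c⁻¹ * (x⁻¹ * y) ∈ C := hUK ⟨h3, h2⟩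
    have := C.mul_mem hc h4
    simpa [mul_assoc] using this
  rw [himg, Set.ncard_image_of_injOn hinj]

lemma measure_image_ratio {G : Type*} [Group G] [TopologicalSpace G] [IsTopologicalGroup G]
    [MeasurableSpace G] [BorelSpace G] (K : Subgroup G) [K.Normal]
    [MeasurableSpace (G ⧸ K)] [BorelSpace (G ⧸ K)]
    (μ : Measure G) [μ.IsMulLeftInvariant]
    (ν : Measure (G ⧸ K)) [ν.IsMulLeftInvariant]
    (U C : Subgroup G) (hCU : C ≤ U) (hUK : U ⊓ K ≤ C)
    (hUcpt : IsCompact (U : Set G)) (hCopen : IsOpen (C : Set G)) :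
    ν ((U.map (QuotientGroup.mk' K) : Subgroup (G ⧸ K)) : Set (G ⧸ K)) * μ (C : Set G) =
      ν ((C.map (QuotientGroup.mk' K) : Subgroup (G ⧸ K)) : Set (G ⧸ K)) * μ (U : Set G) := by
  have hmkcoe : ⇑(QuotientGroup.mk' K) = (QuotientGroup.mk : G → G ⧸ K) := rfl
  have hUb : ((U.map (QuotientGroup.mk' K) : Subgroup (G ⧸ K)) : Set (G ⧸ K)) =
      QuotientGroup.mk '' (U : Set G) := by rw [Subgroup.coe_map, hmkcoe]
  have hCb : ((C.map (QuotientGroup.mk' K) : Subgroup (G ⧸ K)) : Set (G ⧸ K)) =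
      QuotientGroup.mk '' (C : Set G) := by rw [Subgroup.coe_map, hmkcoe]
  have hUbcpt : IsCompact ((U.map (QuotientGroup.mk' K) : Subgroup (G ⧸ K)) : Set (G ⧸ K)) := by
    rw [hUb]; exact hUcpt.image QuotientGroup.continuous_mk
  have hCbopen : IsOpen ((C.map (QuotientGroup.mk' K) : Subgroup (G ⧸ K)) : Set (G ⧸ K)) := by
    rw [hCb]; exact QuotientGroup.isOpenMap_coe _ hCopen
  obtain ⟨h1fin, h1⟩ := measure_eq_ncard_mul μ U C hCU hUcpt hCopen
  obtain ⟨h2fin, h2⟩ := measure_eq_ncard_mul ν (U.map (QuotientGroup.mk' K))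
    (C.map (QuotientGroup.mk' K)) (Subgroup.map_mono hCU) hUbcpt hCbopen
  rw [h1, h2, ← ncard_coset_image_eq K U C hCU hUK]
  ring

/-- Let `G` be a totally disconnected locally compact group and `φ` a
continuous endomorphism of `G`. If there is a local base at the identity consisting of
compact open subgroups `U` all of whose iterated preimages `φ⁻ⁿ(U)` (`n ≥ 1`) are normal
in `G`, then `h_top(φ|_{ker φ}) = 0` and `h_top(φ) = h_top(φ̄)`, where `φ̄` is induced on
`G/ker φ`. -/
theorem entropy_eq_of_kernel_quotient
    (G : Type*) [Group G] [TopologicalSpace G] [IsTopologicalGroup G]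
    [T2Space G] [LocallyCompactSpace G] [TotallyDisconnectedSpace G]
    (φ : G →* G) (hφ : Continuous φ)
    (ℬ : Set (Subgroup G))
    (hbase : (𝓝 (1 : G)).HasBasis (fun U : Subgroup G => U ∈ ℬ) (fun U => (U : Set G)))
    (hcpt : ∀ U ∈ ℬ, IsCompact (U : Set G))
    (hop : ∀ U ∈ ℬ, IsOpen (U : Set G))
    (hnorm : ∀ U ∈ ℬ, ∀ n : ℕ, 1 ≤ n →
      ((fun V : Subgroup G => V.comap φ)^[n] U).Normal) :
    mulHtop ⇑(mulSubHom φ φ.ker) = 0 ∧ mulHtop ⇑φ = mulHtop ⇑(mulQuotHom φ φ.ker) := by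
  have hker : φ.ker ≤ φ.ker.comap φ := by
    intro x hx
    simp only [Subgroup.mem_comap, MonoidHom.mem_ker] at hx ⊢
    rw [hx, map_one]
  have hKclosed : IsClosed ((φ.ker : Subgroup G) : Set G) := by
    have h : ((φ.ker : Subgroup G) : Set G) = ⇑φ ⁻¹' {1} := by
      ext x; simp [MonoidHom.mem_ker]
    rw [h]
    exact isClosed_singleton.preimage hφ
  haveI : IsClosed ((φ.ker : Subgroup G) : Set G) := hKclosed
  constructor
  · -- kernel part: the restriction is the trivial endomorphism
    haveI : LocallyCompactSpace ↥φ.ker := hKclosed.locallyCompactSpace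
    have hψ1 : ∀ x : ↥φ.ker, mulSubHom φ φ.ker x = 1 := by
      intro x
      rw [mulSubHom, dif_pos hker]
      apply Subtype.ext
      show φ (x : G) = ((1 : ↥φ.ker) : G)
      rw [MonoidHom.mem_ker.1 x.2]
      rfl
    rw [mulHtop_eq]
    letI : MeasurableSpace ↥φ.ker := borel ↥φ.ker
    haveI : BorelSpace ↥φ.ker := ⟨rfl⟩
    refine le_antisymm (iSup₂_le fun U hU => ?_) (zero_le)
    have hU1 : (1 : ↥φ.ker) ∈ U := mem_of_mem_nhds hU.2
    have hiter : ∀ n : ℕ, 1 ≤ n → cotraj (⇑(mulSubHom φ φ.ker)) U n = U := by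
      intro n hn
      apply Set.Subset.antisymm (cotraj_subset _ _ hn)
      intro x hx
      refine mem_cotraj.2 fun k hk => ?_
      rcases Nat.eq_zero_or_pos k with rfl | hkpos
      · simpa using hx
      · obtain ⟨j, rfl⟩ := Nat.exists_eq_add_of_le hkpos
        rw [add_comm, Function.iterate_add_apply, Function.iterate_one, hψ1 x,
          Function.iterate_fixed (hψ1 1) j]
        exact hU1
    have : hen Measure.haar (⇑(mulSubHom φ φ.ker)) U =
        atTop.limsup fun n : ℕ =>
          ENNReal.ofReal ((-Real.log ((Measure.haar U).toReal)) / n) := by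
      apply Filter.limsup_congr
      filter_upwards [Filter.eventually_ge_atTop 1] with n hn
      rw [hiter n hn]
    rw [this, aux_limsup_zero]
  · -- main equality
    set K : Subgroup G := φ.ker with hKdef
    set π : G →* G ⧸ φ.ker := QuotientGroup.mk' φ.ker with hπdef
    set φb : G ⧸ φ.ker →* G ⧸ φ.ker := mulQuotHom φ φ.ker with hφbdef
    have hφbπ : ∀ x : G, φb (π x) = π (φ x) := by
      intro x
      rw [hφbdef, mulQuotHom, dif_pos hker]
      rfl
    have hφbiter : ∀ (k : ℕ) (x : G), (⇑φb)^[k] (π x) = π ((⇑φ)^[k] x) := by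
      intro k
      induction k with
      | zero => intro x; simp
      | succ j ih =>
        intro x
        rw [Function.iterate_succ_apply, Function.iterate_succ_apply, hφbπ, ih]
    have hφbcont : Continuous ⇑φb := by
      rw [(QuotientGroup.isQuotientMap_mk φ.ker).continuous_iff]
      have h : ⇑φb ∘ (QuotientGroup.mk : G → G ⧸ φ.ker) = fun x => π (φ x) :=
        funext fun x => hφbπ x
      rw [h]
      exact QuotientGroup.continuous_mk.comp hφ
    rw [mulHtop_eq (⇑φ), mulHtop_eq (⇑φb)]
    letI : MeasurableSpace G := borel G
    haveI : BorelSpace G := ⟨rfl⟩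
    letI : MeasurableSpace (G ⧸ φ.ker) := borel (G ⧸ φ.ker)
    haveI : BorelSpace (G ⧸ φ.ker) := ⟨rfl⟩
    set μ : Measure G := Measure.haar with hμdef
    set ν : Measure (G ⧸ φ.ker) := Measure.haar with hνdef
    -- basic facts about images
    have hmkcoe : ⇑π = (QuotientGroup.mk : G → G ⧸ φ.ker) := rfl
    have hmapopen : ∀ U : Subgroup G, IsOpen (U : Set G) →
        IsOpen ((U.map π : Subgroup (G ⧸ φ.ker)) : Set (G ⧸ φ.ker)) := fun U h => by
      rw [Subgroup.coe_map, hmkcoe]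
      exact QuotientGroup.isOpenMap_coe _ h
    have hmapcpt : ∀ U : Subgroup G, IsCompact (U : Set G) →
        IsCompact ((U.map π : Subgroup (G ⧸ φ.ker)) : Set (G ⧸ φ.ker)) := fun U h => by
      rw [Subgroup.coe_map, hmkcoe]
      exact h.image QuotientGroup.continuous_mk
    -- inclusion 1 : π (C_n(φ,U)) ⊆ C_n(φb, πU)
    have incl1 : ∀ (U : Subgroup G) (n : ℕ),
        ⇑π '' (cotraj ⇑φ ↑U n) ⊆ cotraj ⇑φb ↑(U.map π) n := by
      intro U n xb hxb
      obtain ⟨x, hx, rfl⟩ := hxb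
      refine mem_cotraj.2 fun k hk => ?_
      rw [hφbiter k x]
      exact SetLike.mem_coe.2 (Subgroup.mem_map.2
        ⟨(⇑φ)^[k] x, SetLike.mem_coe.1 (mem_cotraj.1 hx k hk), rfl⟩)
    -- inclusion 2 : C_n(φb, πU') ⊆ π (C_n(φ,U)) when U' ⊆ U ∩ φ⁻¹U
    have incl2 : ∀ (U U' : Subgroup G), ((U' : Set G) ⊆ (U : Set G)) →
        (∀ x ∈ (U' : Set G), φ x ∈ U) → ∀ n : ℕ, 1 ≤ n →
        cotraj ⇑φb ↑(U'.map π) n ⊆ ⇑π '' (cotraj ⇑φ ↑U n) := by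
      intro U U' hsub himg n hn xb hxb
      have h0 : xb ∈ ((U'.map π : Subgroup (G ⧸ φ.ker)) : Set (G ⧸ φ.ker)) :=
        cotraj_subset _ _ hn hxb
      obtain ⟨x0, hx0, rfl⟩ := Subgroup.mem_map.1 (SetLike.mem_coe.1 h0)
      refine ⟨x0, ?_, rfl⟩
      refine mem_cotraj.2 fun j hj => ?_
      rcases Nat.eq_zero_or_pos j with rfl | hjpos
      · simpa using hsub hx0
      · obtain ⟨i, rfl⟩ := Nat.exists_eq_add_of_le hjpos
        have hki : i < n := by omega
        have hmem : (⇑φb)^[i] (π x0) ∈ ((U'.map π : Subgroup (G ⧸ φ.ker)) :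
            Set (G ⧸ φ.ker)) := mem_cotraj.1 hxb i hki
        rw [hφbiter] at hmem
        obtain ⟨u, huU', hueq⟩ := Subgroup.mem_map.1 (SetLike.mem_coe.1 hmem)
        have hkmem : u⁻¹ * ((⇑φ)^[i] x0) ∈ φ.ker := by
          have h1 : π (u⁻¹ * ((⇑φ)^[i] x0)) = 1 := by
            rw [map_mul, map_inv, hueq]
            group
          rwa [← QuotientGroup.ker_mk' φ.ker, MonoidHom.mem_ker]
        have hstep : (⇑φ)^[1 + i] x0 = φ u := by
          have hdecomp : (⇑φ)^[i] x0 = u * (u⁻¹ * ((⇑φ)^[i] x0)) := by group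
          rw [Function.iterate_add_apply, Function.iterate_one, hdecomp, map_mul,
            MonoidHom.mem_ker.1 hkmem, mul_one]
        rw [hstep]
        exact SetLike.mem_coe.2 (himg u huU')
    -- the measure ratio identity
    have ratio : ∀ U ∈ ℬ, ∀ n : ℕ, 1 ≤ n →
        ν ↑(U.map π) * μ ↑(cotrajGrp φ U n) = ν ↑((cotrajGrp φ U n).map π) * μ ↑U := by
      intro U hU n hn
      refine measure_image_ratio φ.ker μ ν U (cotrajGrp φ U n) ?_ ?_ (hcpt U hU) ?_
      · intro x hx
        rw [← SetLike.mem_coe, coe_cotrajGrp] at hx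
        exact SetLike.mem_coe.1 (cotraj_subset _ _ hn hx)
      · exact inf_ker_le_cotrajGrp φ U n
      · rw [coe_cotrajGrp]
        exact cotraj_isOpen hφ (hop U hU) n
    -- positivity and finiteness of the basic measures
    have hμU : ∀ U ∈ ℬ, μ (U : Set G) ≠ 0 ∧ μ (U : Set G) ≠ ⊤ := fun U hU =>
      ⟨((hop U hU).measure_pos μ ⟨1, SetLike.mem_coe.2 U.one_mem⟩).ne',
        ((hcpt U hU).measure_lt_top).ne⟩
    have hνU : ∀ U ∈ ℬ, ν ((U.map π : Subgroup (G ⧸ φ.ker)) : Set (G ⧸ φ.ker)) ≠ 0 ∧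
        ν ((U.map π : Subgroup (G ⧸ φ.ker)) : Set (G ⧸ φ.ker)) ≠ ⊤ := fun U hU =>
      ⟨((hmapopen U (hop U hU)).measure_pos ν
          ⟨1, SetLike.mem_coe.2 (U.map π).one_mem⟩).ne',
        ((hmapcpt U (hcpt U hU)).measure_lt_top).ne⟩
    -- eventualities
    have EVμ : ∀ U ∈ ℬ, ∀ᶠ n in atTop,
        μ (cotraj ⇑φ ↑U n) ≠ 0 ∧ μ (cotraj ⇑φ ↑U n) ≠ ⊤ := fun U hU =>
      ev_posfin μ hφ (map_one φ) (hop U hU) (SetLike.mem_coe.2 U.one_mem)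
        subset_rfl (hcpt U hU)
    have EVν : ∀ U ∈ ℬ, ∀ᶠ n in atTop,
        ν (cotraj ⇑φb ↑(U.map π) n) ≠ 0 ∧ ν (cotraj ⇑φb ↑(U.map π) n) ≠ ⊤ := fun U hU =>
      ev_posfin ν hφbcont (map_one φb) (hmapopen U (hop U hU))
        (SetLike.mem_coe.2 (U.map π).one_mem) subset_rfl (hmapcpt U (hcpt U hU))
    -- Direction 1 : hen of quotient at πU  ≤  hen of G at U
    have dir1 : ∀ U ∈ ℬ, hen ν ⇑φb ↑(U.map π) ≤ hen μ ⇑φ ↑U := by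
      intro U hU
      refine hen_le ν μ ⇑φb ⇑φ ↑(U.map π) ↑U (μ ↑U * (ν ↑(U.map π))⁻¹)
        (mul_ne_zero (hμU U hU).1 (ENNReal.inv_ne_zero.2 (hνU U hU).2))
        (ENNReal.mul_ne_top (hμU U hU).2 (ENNReal.inv_ne_top.2 (hνU U hU).1))
        (EVν U hU) (EVμ U hU) ?_
      filter_upwards [Filter.eventually_ge_atTop 1] with n hn
      have h1 : ν ↑((cotrajGrp φ U n).map π) ≤ ν (cotraj ⇑φb ↑(U.map π) n) := by
        apply measure_mono
        rw [Subgroup.coe_map, hmkcoe, coe_cotrajGrp]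
        exact incl1 U n
      have h2 : μ (cotraj ⇑φ ↑U n) * ν ↑(U.map π) ≤ ν (cotraj ⇑φb ↑(U.map π) n) * μ ↑U := by
        calc μ (cotraj ⇑φ ↑U n) * ν ↑(U.map π) = ν ↑(U.map π) * μ ↑(cotrajGrp φ U n) := by
              rw [coe_cotrajGrp]; ring
          _ = ν ↑((cotrajGrp φ U n).map π) * μ ↑U := ratio U hU n hn
          _ ≤ _ := mul_le_mul_left h1 _
      have h3 : μ (cotraj ⇑φ ↑U n) ≤
          (ν (cotraj ⇑φb ↑(U.map π) n) * μ ↑U) / ν ↑(U.map π) :=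
        (ENNReal.le_div_iff_mul_le (Or.inl (hνU U hU).1) (Or.inl (hνU U hU).2)).2 h2
      calc μ (cotraj ⇑φ ↑U n) ≤ (ν (cotraj ⇑φb ↑(U.map π) n) * μ ↑U) / ν ↑(U.map π) := h3
        _ = μ ↑U * (ν ↑(U.map π))⁻¹ * ν (cotraj ⇑φb ↑(U.map π) n) := by
            rw [div_eq_mul_inv]; ring
    -- Direction 2 : hen of G at U ≤ hen of quotient at πU' when U' ⊆ U ∩ φ⁻¹U
    have dir2 : ∀ U ∈ ℬ, ∀ U' ∈ ℬ, ((U' : Set G) ⊆ (U : Set G) ∩ ⇑φ ⁻¹' (U : Set G)) →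
        hen μ ⇑φ ↑U ≤ hen ν ⇑φb ↑(U'.map π) := by
      intro U hU U' hU' hsub
      have hsub1 : (U' : Set G) ⊆ (U : Set G) := fun x hx => (hsub hx).1
      have hsub2 : ∀ x ∈ (U' : Set G), φ x ∈ U := fun x hx => (hsub hx).2
      refine hen_le μ ν ⇑φ ⇑φb ↑U ↑(U'.map π) (ν ↑(U.map π) * (μ ↑U)⁻¹)
        (mul_ne_zero (hνU U hU).1 (ENNReal.inv_ne_zero.2 (hμU U hU).2))
        (ENNReal.mul_ne_top (hνU U hU).2 (ENNReal.inv_ne_top.2 (hμU U hU).1))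
        (EVμ U hU) (EVν U' hU') ?_
      filter_upwards [Filter.eventually_ge_atTop 1] with n hn
      have h1 : ν (cotraj ⇑φb ↑(U'.map π) n) ≤ ν ↑((cotrajGrp φ U n).map π) := by
        apply measure_mono
        have he : (((cotrajGrp φ U n).map π : Subgroup (G ⧸ φ.ker)) : Set (G ⧸ φ.ker)) =
            ⇑π '' (cotraj ⇑φ ↑U n) := by rw [Subgroup.coe_map, coe_cotrajGrp]
        rw [he]
        exact incl2 U U' hsub1 hsub2 n hn
      have h2 : ν ↑((cotrajGrp φ U n).map π) =
          ν ↑(U.map π) * (μ ↑U)⁻¹ * μ (cotraj ⇑φ ↑U n) := by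
        have h3 : ν ↑((cotrajGrp φ U n).map π) =
            (ν ↑(U.map π) * μ ↑(cotrajGrp φ U n)) / μ ↑U :=
          (ENNReal.eq_div_iff (hμU U hU).1 (hμU U hU).2).2
            (by rw [mul_comm]; exact (ratio U hU n hn).symm)
        rw [h3, coe_cotrajGrp, div_eq_mul_inv]
        ring
      exact h1.trans (le_of_eq h2)
    -- assembling
    apply le_antisymm
    · refine iSup₂_le fun V hV => ?_
      obtain ⟨U, hUb, hUV⟩ := hbase.mem_iff.1 hV.2
      have step1 : hen μ ⇑φ V ≤ hen μ ⇑φ ↑U := by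
        refine hen_le μ μ ⇑φ ⇑φ V ↑U 1 one_ne_zero ENNReal.one_ne_top
          (ev_posfin μ hφ (map_one φ) (hop U hUb) (SetLike.mem_coe.2 U.one_mem) hUV hV.1)
          (EVμ U hUb) ?_
        filter_upwards with n
        rw [one_mul]
        exact measure_mono (cotraj_mono _ hUV n)
      have hnbhd : ((U : Set G) ∩ ⇑φ ⁻¹' (U : Set G)) ∈ 𝓝 (1 : G) := by
        refine Filter.inter_mem ((hop U hUb).mem_nhds (SetLike.mem_coe.2 U.one_mem)) ?_
        apply hφ.continuousAt.preimage_mem_nhds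
        rw [map_one]
        exact (hop U hUb).mem_nhds (SetLike.mem_coe.2 U.one_mem)
      obtain ⟨U', hU'b, hU'sub⟩ := hbase.mem_iff.1 hnbhd
      refine (step1.trans (dir2 U hUb U' hU'b hU'sub)).trans ?_
      exact le_iSup₂_of_le ↑(U'.map π)
        ⟨hmapcpt U' (hcpt U' hU'b),
          (hmapopen U' (hop U' hU'b)).mem_nhds (SetLike.mem_coe.2 (U'.map π).one_mem)⟩ le_rfl
    · refine iSup₂_le fun Vb hVb => ?_
      have hpre : (⇑π ⁻¹' Vb) ∈ 𝓝 (1 : G) := by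
        apply (QuotientGroup.continuous_mk.continuousAt).preimage_mem_nhds
        have h1 : (QuotientGroup.mk (1 : G) : G ⧸ φ.ker) = 1 := by simp
        rw [h1]
        exact hVb.2
      obtain ⟨U, hUb, hUV⟩ := hbase.mem_iff.1 hpre
      have hUVb : ((U.map π : Subgroup (G ⧸ φ.ker)) : Set (G ⧸ φ.ker)) ⊆ Vb := by
        rw [Subgroup.coe_map, hmkcoe]
        exact Set.image_subset_iff.2 hUV
      have step1 : hen ν ⇑φb Vb ≤ hen ν ⇑φb ↑(U.map π) := by
        refine hen_le ν ν ⇑φb ⇑φb Vb ↑(U.map π) 1 one_ne_zero ENNReal.one_ne_top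
          (ev_posfin ν hφbcont (map_one φb) (hmapopen U (hop U hUb))
            (SetLike.mem_coe.2 (U.map π).one_mem) hUVb hVb.1)
          (EVν U hUb) ?_
        filter_upwards with n
        rw [one_mul]
        exact measure_mono (cotraj_mono _ hUVb n)
      refine (step1.trans (dir1 U hUb)).trans ?_
      exact le_iSup₂_of_le ↑U
        ⟨hcpt U hUb, (hop U hUb).mem_nhds (SetLike.mem_coe.2 U.one_mem)⟩ le_rfl
end

section
/- Let G be a totally disconnected Hausdorff locally compact abelian group, φ a continuous endomorphism of G, and H a φ-invariant closed subgroup of G. Then the scale satisfies s(φ) ≥ max{ s(φ|_H), s(φ̄) }, where φ̄ is the endomorphism induced by φ on G/H, φ|_H and φ̄ being continuous endomorphisms of the totally disconnected locally compact groups H and G/H respectively. -/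
open MeasureTheory Filter Topology Pointwise
open scoped ENNReal NNReal Classical

/-- Topological entropy of a (continuous) endomorphism of a locally compact Hausdorff
additive topological group, computed with respect to Haar measure:
`h_top(φ) = sup_U limsup_n (−log μ(C_n(φ,U)))/n`, the supremum over all compact
neighborhoods `U` of `0`. -/
noncomputable def addHtop {G : Type*} [AddGroup G] [TopologicalSpace G] (φ : G → G) : ℝ≥0∞ :=
  letI : MeasurableSpace G := borel G
  haveI : BorelSpace G := ⟨rfl⟩
  if h : IsTopologicalAddGroup G ∧ T2Space G ∧ LocallyCompactSpace G then
    haveI := h.1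
    haveI := h.2.1
    haveI := h.2.2
    ⨆ U ∈ {U : Set G | IsCompact U ∧ U ∈ 𝓝 (0 : G)},
      Filter.atTop.limsup fun n : ℕ =>
        ENNReal.ofReal
          ((-Real.log ((MeasureTheory.Measure.addHaar (cotraj φ U n)).toReal)) / n)
  else 0

/-- The restriction of an endomorphism to an invariant subgroup
(junk value `0` if the subgroup is not invariant). -/
noncomputable def subHom {G : Type*} [AddGroup G] (φ : G →+ G) (H : AddSubgroup G) : H →+ H :=
  if h : H ≤ H.comap φ then (φ.domRestrict H).codRestrict H (fun x => h x.2) else 0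

/-- The endomorphism induced on the quotient by an invariant subgroup
(junk value `0` if the subgroup is not invariant). -/
noncomputable def quotHom {G : Type*} [AddCommGroup G] (φ : G →+ G) (H : AddSubgroup G) :
    G ⧸ H →+ G ⧸ H :=
  if h : H ≤ H.comap φ then QuotientAddGroup.map H H φ h else 0

/-- The scale of an endomorphism of a totally disconnected locally compact group:
the minimum of the indices `[φ(U) : U ∩ φ(U)]` over all compact open subgroups `U`. -/
noncomputable def addScale {G : Type*} [AddGroup G] [TopologicalSpace G] (φ : G →+ G) : ℕ :=
  sInf ((fun U : AddSubgroup G => AddSubgroup.relIndex U (AddSubgroup.map φ U)) ''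
    {U : AddSubgroup G | IsCompact (U : Set G) ∧ IsOpen (U : Set G)})

section Aux

variable {G : Type*} [AddCommGroup G] [TopologicalSpace G] [IsTopologicalAddGroup G]

/-- Additive, locally-compact variant of `TopologicalGroup.exist_mul_closure_nhd`. -/
private lemma exist_add_closure_nhd' {W : Set G} (Wc : IsCompact W) (Wo : IsOpen W) :
    ∃ T ∈ 𝓝 (0 : G), W + T ⊆ W := by
  apply Wc.induction_on (p := fun S ↦ ∃ T ∈ 𝓝 (0 : G), S + T ⊆ W)
    ⟨Set.univ, by simp only [Filter.univ_mem, Set.empty_add, Set.empty_subset, and_self]⟩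
    (fun _ _ huv ⟨T, hT, mem⟩ ↦ ⟨T, hT, (Set.add_subset_add_right huv).trans mem⟩)
    (fun U V ⟨T₁, hT₁, mem1⟩ ⟨T₂, hT₂, mem2⟩ ↦ ⟨T₁ ∩ T₂, Filter.inter_mem hT₁ hT₂, by
      rw [Set.union_add]
      exact Set.union_subset ((Set.add_subset_add_left Set.inter_subset_left).trans mem1)
        ((Set.add_subset_add_left Set.inter_subset_right).trans mem2)⟩)
  intro x memW
  have : (x, (0 : G)) ∈ (fun p : G × G ↦ p.1 + p.2) ⁻¹' W := by simp [memW]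
  rcases isOpen_prod_iff.mp (continuous_add.isOpen_preimage W Wo) x 0 this with
    ⟨U, V, Uopen, Vopen, xmemU, zmemV, prodsub⟩
  have h6 : U + V ⊆ W :=
    Set.add_subset_iff.mpr fun _ hx _ hy ↦ prodsub (Set.mk_mem_prod hx hy)
  exact ⟨U ∩ W, ⟨U, Uopen.mem_nhds xmemU, W, fun _ a ↦ a, rfl⟩,
    V, Vopen.mem_nhds zmemV, fun _ a ↦ h6 ((Set.add_subset_add_right Set.inter_subset_left) a)⟩

omit [TopologicalSpace G] [IsTopologicalAddGroup G] in
private lemma neg_nsmul_set (V : Set G) (n : ℕ) : -(n • V) = n • (-V) := by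
  induction n with
  | zero => simp
  | succ n ih => rw [succ_nsmul, succ_nsmul, neg_add, ih]

/-- van Dantzig: a totally disconnected locally compact Hausdorff abelian group has a
compact open subgroup. -/
private lemma exists_compact_open_addSubgroup (G : Type*) [AddCommGroup G] [TopologicalSpace G]
    [IsTopologicalAddGroup G] [T2Space G] [LocallyCompactSpace G] [TotallyDisconnectedSpace G] :
    ∃ U : AddSubgroup G, IsCompact (U : Set G) ∧ IsOpen (U : Set G) := by
  obtain ⟨K, hKc, hKn⟩ := exists_compact_mem_nhds (0 : G)
  have hint : (0 : G) ∈ interior K := mem_interior_iff_mem_nhds.mpr hKn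
  obtain ⟨W, hWcl, hW0, hWK⟩ :=
    loc_compact_Haus_tot_disc_of_zero_dim.mem_nhds_iff.mp
      (isOpen_interior.mem_nhds hint)
  have hWcl : IsClopen W := hWcl
  have Wc : IsCompact W := hKc.of_isClosed_subset hWcl.1 (hWK.trans interior_subset)
  obtain ⟨T, hT, hWT⟩ := exist_add_closure_nhd' Wc hWcl.2
  obtain ⟨U', hU'T, U'open, h0U'⟩ := mem_nhds_iff.mp hT
  set V : Set G := U' ∩ (-U') with hVdef
  have V0 : (0 : G) ∈ V := ⟨h0U', by simpa using h0U'⟩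
  have Vopen : IsOpen V := U'open.inter U'open.neg
  have Vsymm : -V = V := by
    ext x
    simp [hVdef, Set.mem_neg, and_comm]
  have VsubT : V ⊆ T := fun x hx ↦ hU'T hx.1
  have hWV : W + V ⊆ W := (Set.add_subset_add_left VsubT).trans hWT
  let S : AddSubgroup G :=
    { carrier := ⋃ n : ℕ, (n + 1) • V
      zero_mem' := Set.mem_iUnion.mpr ⟨0, by simpa using V0⟩
      add_mem' := fun {a b} ha hb ↦ by
        obtain ⟨k, hk⟩ := Set.mem_iUnion.mp ha
        obtain ⟨l, hl⟩ := Set.mem_iUnion.mp hb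
        refine Set.mem_iUnion.mpr ⟨k + 1 + l, ?_⟩
        have : (k + 1 + l + 1) • V = (k + 1) • V + (l + 1) • V := by
          rw [← add_nsmul]; ring_nf
        rw [this]
        exact Set.add_mem_add hk hl
      neg_mem' := fun {a} ha ↦ by
        obtain ⟨k, hk⟩ := Set.mem_iUnion.mp ha
        refine Set.mem_iUnion.mpr ⟨k, ?_⟩
        rw [← Vsymm, ← neg_nsmul_set]
        exact Set.neg_mem_neg.mpr hk }
  have Sopen : IsOpen (S : Set G) := by
    refine isOpen_iUnion fun n ↦ ?_
    rw [succ_nsmul]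
    exact Vopen.add_left
  have WaddV : ∀ n : ℕ, W + (n + 1) • V ⊆ W := by
    intro n
    induction n with
    | zero => simpa using hWV
    | succ n ih =>
      rw [succ_nsmul, ← add_assoc]
      exact (Set.add_subset_add_right ih).trans hWV
  have SsubW : (S : Set G) ⊆ W := by
    intro x hx
    obtain ⟨n, hn⟩ := Set.mem_iUnion.mp hx
    exact WaddV n ⟨0, hW0, x, hn, zero_add x⟩
  have Sclosed : IsClosed (S : Set G) := S.isClosed_of_isOpen Sopen
  exact ⟨S, Wc.of_isClosed_subset Sclosed SsubW, Sopen⟩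

end Aux

/-- For a totally disconnected locally compact abelian group `G`, a
continuous endomorphism `φ` and a `φ`-invariant closed subgroup `H`:
`s(φ) ≥ max (s(φ|_H)) (s(φ̄))`, where `φ̄` is induced on `G/H`. -/
theorem scale_ge_max_restriction_quotient
    (G : Type*) [AddCommGroup G] [TopologicalSpace G] [IsTopologicalAddGroup G]
    [T2Space G] [LocallyCompactSpace G] [TotallyDisconnectedSpace G]
    (φ : G →+ G) (hφ : Continuous φ)
    (H : AddSubgroup G) (hH : IsClosed (H : Set G)) (hinv : H ≤ H.comap φ) :
    max (addScale (subHom φ H)) (addScale (quotHom φ H)) ≤ addScale φ := by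
  classical
  obtain ⟨U₀, hU₀⟩ := exists_compact_open_addSubgroup G
  set Sφ : Set ℕ := ((fun U : AddSubgroup G => AddSubgroup.relIndex U (AddSubgroup.map φ U)) ''
    {U : AddSubgroup G | IsCompact (U : Set G) ∧ IsOpen (U : Set G)}) with hSφ
  have hne : Sφ.Nonempty := ⟨_, ⟨U₀, hU₀, rfl⟩⟩
  have hmem : addScale φ ∈ Sφ := Nat.sInf_mem hne
  obtain ⟨U, ⟨hUc, hUo⟩, hUeq⟩ := hmem
  -- the reference index is finite (nonzero)
  have hKc : IsCompact ((U.map φ : AddSubgroup G) : Set G) := by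
    rw [AddSubgroup.coe_map]
    exact hUc.image hφ
  have hfin : U.relIndex (U.map φ) ≠ 0 := by
    haveI : CompactSpace (U.map φ) := isCompact_iff_compactSpace.mp hKc
    have hopen : IsOpen ((U.addSubgroupOf (U.map φ) : AddSubgroup (U.map φ)) : Set (U.map φ)) :=
      hUo.preimage continuous_subtype_val
    haveI : Finite ((U.map φ) ⧸ U.addSubgroupOf (U.map φ)) :=
      AddSubgroup.quotient_finite_of_isOpen _ hopen
    exact AddSubgroup.index_ne_zero_of_finite
  have hpos : 0 < U.relIndex (U.map φ) := Nat.pos_of_ne_zero hfin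
  -- restriction bound
  have h1 : addScale (subHom φ H) ≤ U.relIndex (U.map φ) := by
    set ι : H →+ G := H.subtype with hι
    set ψ : H →+ H := subHom φ H with hψ
    have hcomp : ι.comp ψ = φ.comp ι := by
      ext x
      simp [hψ, hι, subHom, dif_pos hinv]
      rfl
    set V : AddSubgroup H := U.comap ι with hV
    have hVo : IsOpen (V : Set H) := hUo.preimage continuous_subtype_val
    have hVc : IsCompact (V : Set H) := by
      have hce : IsClosedEmbedding (Subtype.val : H → G) :=
        hH.isClosedEmbedding_subtypeVal
      have : (V : Set H) = (Subtype.val : H → G) ⁻¹' U := rfl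
      rw [this]
      exact hce.isProperMap.isCompact_preimage hUc
    have step1 : addScale ψ ≤ V.relIndex (V.map ψ) :=
      Nat.sInf_le ⟨V, ⟨hVc, hVo⟩, rfl⟩
    have step2 : V.relIndex (V.map ψ) = U.relIndex ((V.map ψ).map ι) :=
      AddSubgroup.relIndex_comap (H := U) ι (V.map ψ)
    have step3 : (V.map ψ).map ι ≤ U.map φ := by
      rw [AddSubgroup.map_map, hcomp, ← AddSubgroup.map_map]
      exact AddSubgroup.map_mono (AddSubgroup.map_comap_le ι U)
    calc addScale ψ ≤ V.relIndex (V.map ψ) := step1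
      _ = U.relIndex ((V.map ψ).map ι) := step2
      _ ≤ U.relIndex (U.map φ) := AddSubgroup.relIndex_le_of_le_right step3 hfin
  -- quotient bound
  have h2 : addScale (quotHom φ H) ≤ U.relIndex (U.map φ) := by
    set π : G →+ G ⧸ H := QuotientAddGroup.mk' H with hπ
    set φq : G ⧸ H →+ G ⧸ H := quotHom φ H with hφq
    have hcomp : φq.comp π = π.comp φ := by
      ext x
      simp [hφq, hπ, quotHom, dif_pos hinv]
    set Ubar : AddSubgroup (G ⧸ H) := U.map π with hUbar
    have hUbaro : IsOpen (Ubar : Set (G ⧸ H)) := by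
      rw [hUbar, AddSubgroup.coe_map]
      exact QuotientAddGroup.isOpenMap_coe _ hUo
    have hUbarc : IsCompact (Ubar : Set (G ⧸ H)) := by
      rw [hUbar, AddSubgroup.coe_map]
      exact hUc.image continuous_quot_mk
    have step1 : addScale φq ≤ Ubar.relIndex (Ubar.map φq) :=
      Nat.sInf_le ⟨Ubar, ⟨hUbarc, hUbaro⟩, rfl⟩
    have step2 : Ubar.map φq = (U.map φ).map π := by
      rw [hUbar, AddSubgroup.map_map, hcomp, AddSubgroup.map_map]
    have step3 : Ubar.relIndex ((U.map φ).map π) = (Ubar.comap π).relIndex (U.map φ) :=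
      (AddSubgroup.relIndex_comap (H := Ubar) π (U.map φ)).symm
    have step4 : U ≤ Ubar.comap π := AddSubgroup.le_comap_map π U
    calc addScale φq ≤ Ubar.relIndex (Ubar.map φq) := step1
      _ = (Ubar.comap π).relIndex (U.map φ) := by rw [step2, step3]
      _ ≤ U.relIndex (U.map φ) := AddSubgroup.relIndex_le_of_le_left step4 hfin
  exact le_of_le_of_eq (max_le h1 h2) hUeq
end
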